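/- Let Γ be a cancellation monoid with neutral element e and let A = ⊕_{γ∈Γ} A_γ be a Γ-graded ring. Then the degree-e part A_e is a local ring in the classical sense if and only if the two-sided ideal 𝔐 of A generated by all non-invertible homogeneous elements of A is a proper ideal of A. -/

import Mathlib

open DirectSum Pointwise

section Helpers

lemma aux_addCancel_comm {Γ : Type*} [AddCancelMonoid Γ] {α δ : Γ} (h : α + δ = 0) :
    δ + α = 0 := by
  have : α + (δ + α) = α + 0 := by rw [← add_assoc, h, zero_add, add_zero]
  exact add_left_cancel this

variable {Γ : Type*} [AddCancelMonoid Γ] [DecidableEq Γ]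
variable {A : Type*} [Ring A] (𝒜 : Γ → AddSubgroup A) [GradedRing 𝒜]

/-- The coercion ring hom from `𝒜 0` to `A`. -/
def aux_coeRH : (𝒜 0) →+* A where
  toFun := Subtype.val
  map_one' := rfl
  map_mul' _ _ := rfl
  map_zero' := rfl
  map_add' _ _ := rfl

lemma aux_decompose_mul_left {a : A} (ha : a ∈ 𝒜 0) (b : A) :
    (DirectSum.decompose 𝒜 (a * b) 0 : A) = a * (DirectSum.decompose 𝒜 b 0 : A) := by
  refine DirectSum.Decomposition.inductionOn 𝒜
    (motive := fun b => (DirectSum.decompose 𝒜 (a * b) 0 : A) = a * (DirectSum.decompose 𝒜 b 0 : A))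
    ?_ ?_ ?_ b
  · simp
  · rintro i ⟨c, hc⟩
    have hac : a * c ∈ 𝒜 i := by simpa using SetLike.mul_mem_graded ha hc
    by_cases h : i = 0
    · subst h
      rw [DirectSum.decompose_of_mem_same 𝒜 hac, DirectSum.decompose_of_mem_same 𝒜 hc]
    · rw [DirectSum.decompose_of_mem_ne 𝒜 hac h, DirectSum.decompose_of_mem_ne 𝒜 hc h, mul_zero]
  · intro c d hc hd
    rw [mul_add, DirectSum.decompose_add, DirectSum.add_apply, AddSubgroup.coe_add, hc, hd,
      DirectSum.decompose_add, DirectSum.add_apply, AddSubgroup.coe_add, mul_add]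

lemma aux_decompose_mul_right {a : A} (ha : a ∈ 𝒜 0) (b : A) :
    (DirectSum.decompose 𝒜 (b * a) 0 : A) = (DirectSum.decompose 𝒜 b 0 : A) * a := by
  refine DirectSum.Decomposition.inductionOn 𝒜
    (motive := fun b => (DirectSum.decompose 𝒜 (b * a) 0 : A) = (DirectSum.decompose 𝒜 b 0 : A) * a)
    ?_ ?_ ?_ b
  · simp
  · rintro i ⟨c, hc⟩
    have hca : c * a ∈ 𝒜 i := by simpa using SetLike.mul_mem_graded hc ha
    by_cases h : i = 0
    · subst h
      rw [DirectSum.decompose_of_mem_same 𝒜 hca, DirectSum.decompose_of_mem_same 𝒜 hc]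
    · rw [DirectSum.decompose_of_mem_ne 𝒜 hca h, DirectSum.decompose_of_mem_ne 𝒜 hc h, zero_mul]
  · intro c d hc hd
    rw [add_mul, DirectSum.decompose_add, DirectSum.add_apply, AddSubgroup.coe_add, hc, hd,
      DirectSum.decompose_add, DirectSum.add_apply, AddSubgroup.coe_add, add_mul]

lemma aux_isUnit_coe {a : 𝒜 0} (h : IsUnit a) : IsUnit (a : A) :=
  h.map (aux_coeRH 𝒜)

lemma aux_isUnit_of_coe {a : A} (ha : a ∈ 𝒜 0) (h : IsUnit a) :
    IsUnit (⟨a, ha⟩ : 𝒜 0) := by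
  obtain ⟨b, hab, hba⟩ := isUnit_iff_exists.mp h
  have h1 : a * (DirectSum.decompose 𝒜 b 0 : A) = 1 := by
    rw [← aux_decompose_mul_left 𝒜 ha b, hab,
      DirectSum.decompose_of_mem_same 𝒜 (SetLike.one_mem_graded 𝒜)]
  have h2 : (DirectSum.decompose 𝒜 b 0 : A) * a = 1 := by
    rw [← aux_decompose_mul_right 𝒜 ha b, hba,
      DirectSum.decompose_of_mem_same 𝒜 (SetLike.one_mem_graded 𝒜)]
  exact isUnit_iff_exists.mpr ⟨⟨_, SetLike.coe_mem _⟩, Subtype.ext h1, Subtype.ext h2⟩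

/-- In a graded ring over a cancellation monoid with local degree-zero part, a homogeneous
right inverse is a two-sided inverse. -/
lemma aux_left_inv (hL : IsLocalRing (𝒜 0)) {α δ : Γ} {x y : A}
    (hx : x ∈ 𝒜 α) (hy : y ∈ 𝒜 δ) (hαδ : α + δ = 0) (h1 : x * y = 1) : y * x = 1 := by
  have h0 : δ + α = 0 := aux_addCancel_comm hαδ
  have hyx : y * x ∈ 𝒜 0 := h0 ▸ SetLike.mul_mem_graded hy hx
  set E : 𝒜 0 := ⟨y * x, hyx⟩ with hEdef
  have hE : E * E = E := by
    refine Subtype.ext ?_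
    show (y * x) * (y * x) = y * x
    rw [mul_assoc, ← mul_assoc x y x, h1, one_mul]
  rcases IsLocalRing.isUnit_or_isUnit_of_add_one (a := E) (b := 1 - E) (by abel) with hu | hu
  · have hE1 : E = 1 := hu.mul_left_cancel (by rw [hE, mul_one])
    exact congrArg Subtype.val hE1
  · have hE0 : E = 0 := hu.mul_left_cancel
      (by rw [sub_mul, one_mul, hE, sub_self, mul_zero])
    have hyx0 : y * x = 0 := congrArg Subtype.val hE0
    have hx0 : x = 0 := by
      calc x = 1 * x := (one_mul x).symm
      _ = x * (y * x) := by rw [← h1, mul_assoc]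
      _ = 0 := by rw [hyx0, mul_zero]
    have : (1 : A) = 0 := by rw [← h1, hx0, zero_mul]
    exact absurd (Subtype.ext this : (1 : 𝒜 0) = 0) one_ne_zero

/-- Key lemma: a degree-zero product through a non-invertible homogeneous element is a
nonunit of the degree-zero part. -/
lemma aux_key (hL : IsLocalRing (𝒜 0)) {α γ β : Γ} {x s y : A}
    (hx : x ∈ 𝒜 α) (hs : s ∈ 𝒜 γ) (hy : y ∈ 𝒜 β) (hd : α + γ + β = 0)
    (hns : ¬IsUnit s) (hm : x * s * y ∈ 𝒜 0) : ¬IsUnit (⟨x * s * y, hm⟩ : 𝒜 0) := by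
  intro hu
  obtain ⟨w, hw1, hw2⟩ := isUnit_iff_exists.mp hu
  have hw1' : (x * s * y) * (w : A) = 1 := congrArg Subtype.val hw1
  have hr : s * y * (w : A) ∈ 𝒜 (γ + β) := by
    have := SetLike.mul_mem_graded (SetLike.mul_mem_graded hs hy) w.2
    rwa [add_zero] at this
  have hxr : x * (s * y * (w : A)) = 1 := by
    simp only [← mul_assoc]; simpa only [← mul_assoc] using hw1'
  have hd' : α + (γ + β) = 0 := by rw [← add_assoc]; exact hd
  have hrx : (s * y * (w : A)) * x = 1 := aux_left_inv 𝒜 hL hx hr hd' hxr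
  have ht : y * (w : A) * x ∈ 𝒜 (β + α) := by
    have h1 : y * (w : A) ∈ 𝒜 β := by
      have := SetLike.mul_mem_graded hy w.2; rwa [add_zero] at this
    exact SetLike.mul_mem_graded h1 hx
  have hst : s * (y * (w : A) * x) = 1 := by
    simp only [← mul_assoc]; simpa only [← mul_assoc] using hrx
  have hd'' : γ + (β + α) = 0 := by
    rw [← add_assoc]
    exact aux_addCancel_comm hd'
  have hts := aux_left_inv 𝒜 hL hs ht hd'' hst
  exact hns (isUnit_iff_exists.mpr ⟨_, hst, hts⟩)

lemma aux_nonunits_add {R : Type*} [Ring R] [IsLocalRing R] {a b : R}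
    (ha : ¬IsUnit a) (hb : ¬IsUnit b) : ¬IsUnit (a + b) := by
  rintro ⟨u, hu⟩
  have h1 : (↑u⁻¹ : R) * a + (↑u⁻¹ : R) * b = 1 := by
    rw [← mul_add, ← hu, Units.inv_mul]
  rcases IsLocalRing.isUnit_or_isUnit_of_add_one h1 with h | h
  · have h2 := u.isUnit.mul h
    rw [← mul_assoc, Units.mul_inv, one_mul] at h2
    exact ha h2
  · have h2 := u.isUnit.mul h
    rw [← mul_assoc, Units.mul_inv, one_mul] at h2
    exact hb h2

end Helpers

/-- **Theorem 2.5.** Let `Γ` be a cancellation monoid (written additively, with neutral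
element `0`) and let `A = ⊕_{γ∈Γ} A_γ` be a `Γ`-graded ring.  Then the degree-`0` part
`A_0` is a local ring in the classical sense if and only if the two-sided ideal `𝔐` of `A`
generated by all non-invertible homogeneous elements of `A` is a proper ideal of `A`. -/
theorem degree_zero_part_isLocalRing_iff_span_nonunit_homogeneous_ne_top
    {Γ : Type*} [AddCancelMonoid Γ] [DecidableEq Γ]
    {A : Type*} [Ring A] (𝒜 : Γ → AddSubgroup A) [GradedRing 𝒜] :
    IsLocalRing (𝒜 0) ↔
      TwoSidedIdeal.span {a : A | (a ≠ 0 ∧ ∃ γ, a ∈ 𝒜 γ) ∧ ¬IsUnit a} ≠ ⊤ := by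
  classical
  set S : Set A := {a : A | (a ≠ 0 ∧ ∃ γ, a ∈ 𝒜 γ) ∧ ¬IsUnit a} with hSdef
  constructor
  · -- forward direction
    intro hL hTop
    haveI := hL
    have h1 : (1 : A) ∈ TwoSidedIdeal.span S :=
      (TwoSidedIdeal.one_mem_iff _).mpr hTop
    rw [TwoSidedIdeal.mem_span_iff_mem_addSubgroup_closure] at h1
    -- the additive subgroup of `A` of elements of `𝒜 0` which are nonunits of `𝒜 0`
    let N : AddSubgroup A :=
      { carrier := {z | ∃ hz : z ∈ 𝒜 0, ¬IsUnit (⟨z, hz⟩ : 𝒜 0)}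
        zero_mem' := ⟨zero_mem _, by
          intro h
          exact not_isUnit_zero (M₀ := (𝒜 0)) h⟩
        add_mem' := by
          rintro x y ⟨hx, hxu⟩ ⟨hy, hyu⟩
          refine ⟨add_mem hx hy, fun h => ?_⟩
          exact aux_nonunits_add (a := (⟨x, hx⟩ : 𝒜 0)) (b := ⟨y, hy⟩) hxu hyu h
        neg_mem' := by
          rintro x ⟨hx, hxu⟩
          refine ⟨neg_mem hx, fun h => hxu ?_⟩
          have h2 := h.neg
          have h3 : (-(⟨-x, neg_mem hx⟩ : 𝒜 0)) = ⟨x, hx⟩ := Subtype.ext (by simp)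
          rwa [h3] at h2 }
    have hle : AddSubgroup.closure ((GradedRing.proj 𝒜 0) ''
        ((Set.univ : Set A) * S * Set.univ)) ≤ N := by
      rw [AddSubgroup.closure_le]
      rintro _ ⟨t, ht, rfl⟩
      obtain ⟨u, ⟨x, -, s, hs, rfl⟩, y, -, rfl⟩ := ht
      obtain ⟨⟨hs0, γ, hsγ⟩, hsu⟩ := hs
      have hxsum := DirectSum.sum_support_decompose 𝒜 x
      have hysum := DirectSum.sum_support_decompose 𝒜 y
      have hrw : x * s * y = ∑ α ∈ (DirectSum.decompose 𝒜 x).support,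
          ∑ β ∈ (DirectSum.decompose 𝒜 y).support,
          (DirectSum.decompose 𝒜 x α : A) * s * (DirectSum.decompose 𝒜 y β : A) := by
        conv_lhs => rw [← hxsum, ← hysum]
        simp only [Finset.sum_mul, Finset.mul_sum]
        rw [Finset.sum_comm]
      show GradedRing.proj 𝒜 0 (x * s * y) ∈ N
      rw [hrw, map_sum]
      refine AddSubgroup.sum_mem N fun α hα => ?_
      rw [map_sum]
      refine AddSubgroup.sum_mem N fun β hβ => ?_
      have hxa : (DirectSum.decompose 𝒜 x α : A) ∈ 𝒜 α := SetLike.coe_mem _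
      have hyb : (DirectSum.decompose 𝒜 y β : A) ∈ 𝒜 β := SetLike.coe_mem _
      have hprod : (DirectSum.decompose 𝒜 x α : A) * s * (DirectSum.decompose 𝒜 y β : A)
          ∈ 𝒜 (α + γ + β) :=
        SetLike.mul_mem_graded (SetLike.mul_mem_graded hxa hsγ) hyb
      by_cases hdeg : α + γ + β = 0
      · have hm0 : (DirectSum.decompose 𝒜 x α : A) * s * (DirectSum.decompose 𝒜 y β : A)
            ∈ 𝒜 0 := hdeg ▸ hprod
        have heq : GradedRing.proj 𝒜 0 ((DirectSum.decompose 𝒜 x α : A) * s *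
            (DirectSum.decompose 𝒜 y β : A)) = (DirectSum.decompose 𝒜 x α : A) * s *
            (DirectSum.decompose 𝒜 y β : A) := by
          rw [GradedRing.proj_apply, DirectSum.decompose_of_mem_same 𝒜 hm0]
        rw [heq]
        exact ⟨hm0, aux_key 𝒜 hL hxa hsγ hyb hdeg hsu hm0⟩
      · have heq : GradedRing.proj 𝒜 0 ((DirectSum.decompose 𝒜 x α : A) * s *
            (DirectSum.decompose 𝒜 y β : A)) = 0 := by
          rw [GradedRing.proj_apply, DirectSum.decompose_of_mem_ne 𝒜 hprod hdeg]
        rw [heq]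
        exact N.zero_mem
    have hone : (1 : A) ∈ N := by
      have hmap : GradedRing.proj 𝒜 0 1 ∈
          (AddSubgroup.closure ((Set.univ : Set A) * S * Set.univ)).map (GradedRing.proj 𝒜 0) :=
        AddSubgroup.mem_map_of_mem _ h1
      rw [AddMonoidHom.map_closure] at hmap
      have hproj1 : GradedRing.proj 𝒜 0 (1 : A) = 1 := by
        rw [GradedRing.proj_apply, DirectSum.decompose_of_mem_same 𝒜 (SetLike.one_mem_graded 𝒜)]
      rw [hproj1] at hmap
      exact hle hmap
    obtain ⟨hm, hu⟩ := hone
    exact hu (by rw [show (⟨(1 : A), hm⟩ : 𝒜 0) = 1 from Subtype.ext rfl]; exact isUnit_one)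
  · -- backward direction
    intro hne
    haveI hnt : Nontrivial (𝒜 0) := by
      by_contra h
      rw [not_nontrivial_iff_subsingleton] at h
      apply hne
      rw [← TwoSidedIdeal.one_mem_iff]
      have h10 : ((1 : 𝒜 0) : A) = ((0 : 𝒜 0) : A) := congrArg _ (Subsingleton.elim _ _)
      have h1z : (1 : A) = 0 := by simpa using h10
      rw [h1z]
      exact TwoSidedIdeal.zero_mem _
    have key : ∀ c : 𝒜 0, ¬IsUnit c → (c : A) ∈ TwoSidedIdeal.span S := by
      intro c hc
      by_cases h0 : (c : A) = 0
      · rw [h0]; exact TwoSidedIdeal.zero_mem _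
      · refine TwoSidedIdeal.subset_span ⟨⟨h0, 0, c.2⟩, fun hu => hc ?_⟩
        have := aux_isUnit_of_coe 𝒜 c.2 hu
        simpa using this
    refine { toNontrivial := hnt, isUnit_or_isUnit_of_add_one := fun {a b} hab => ?_ }
    by_contra hor
    rw [not_or] at hor
    obtain ⟨ha, hb⟩ := hor
    apply hne
    rw [← TwoSidedIdeal.one_mem_iff]
    have hmem := (TwoSidedIdeal.span S).add_mem (key a ha) (key b hb)
    have hco : ((a : A) + (b : A)) = 1 := by
      have := congrArg (Subtype.val) hab
      simpa using this
    rwa [hco] at hmem
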